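/- Let F_2 = F(a,b) and let τ be the Whitehead automorphism with τ(a) = ab^{-1}, τ(b) = b. Let w be a cyclically reduced positive word in {a,b} of length n ≥ 1 (every letter is a or b), and let ⟨v,w⟩ denote the cyclic number of occurrences of the word v in w. Then the cyclically reduced length of τ(w) equals ‖τ(w)‖_A = n + ⟨aa,w⟩ − ⟨ab,w⟩. -/

import Mathlib

/-- Cyclic occurrence count: the number of indices `i ∈ {0,…,|w|-1}` such that
the word `v` occurs in the periodic extension `w^∞ = www⋯` starting at
position `i` (all positions read modulo `|w|`). -/
def cycCount {S : Type*} [DecidableEq S] (w v : List S) : ℕ :=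
  ((Finset.range w.length).filter fun i =>
    ∀ j ∈ Finset.range v.length, w[(i + j) % w.length]? = v[j]?).card

/-- Cyclically reduced length of an element of the free group: the minimum of
the word lengths of its conjugates. -/
noncomputable def cycNorm {α : Type*} [DecidableEq α] (g : FreeGroup α) : ℕ :=
  sInf (Set.range fun x : FreeGroup α => FreeGroup.norm (x * g * x⁻¹))

open FreeGroup List
set_option linter.unusedSectionVars false
set_option maxHeartbeats 1000000

section General
variable {α : Type*} [DecidableEq α]


def IsRed (L : List (α × Bool)) : Prop :=
  List.IsChain (fun p q => q ≠ (p.1, !p.2)) L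

lemma isRed_infix {L l : List (α × Bool)} (h : IsRed L) (h' : l <:+: L) : IsRed l :=
  List.IsChain.infix h h'

lemma not_isRed_of_step {L L' : List (α × Bool)} (h : FreeGroup.Red.Step L L') :
    ¬ IsRed L := by
  cases h with
  | @not L₁ L₂ x b =>
    intro hr
    have : IsRed [(x,b), (x,!b)] := isRed_infix hr ⟨L₁, L₂, by simp⟩
    rw [IsRed, List.isChain_pair] at this
    exact this rfl

lemma reduce_eq_self_of_isRed {L : List (α × Bool)} (h : IsRed L) :
    FreeGroup.reduce L = L := by
  have hred : FreeGroup.Red L (FreeGroup.reduce L) := FreeGroup.reduce.red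
  rcases Relation.ReflTransGen.cases_head hred with h1 | ⟨L', hstep, _⟩
  · exact h1.symm
  · exact absurd h (not_isRed_of_step hstep)

lemma toWord_mk_of_isRed {L : List (α × Bool)} (h : IsRed L) :
    (FreeGroup.mk L).toWord = L := by
  rw [FreeGroup.toWord_mk, reduce_eq_self_of_isRed h]

lemma exists_of_not_chain' {R : α × Bool → α × Bool → Prop} :
    ∀ {L : List (α × Bool)}, ¬ List.IsChain R L →
      ∃ L₁ x y L₂, L = L₁ ++ x :: y :: L₂ ∧ ¬ R x y := by
  intro L
  induction L with
  | nil => intro h; exact absurd List.isChain_nil h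
  | cons x l ih =>
    cases l with
    | nil => intro h; exact absurd (List.isChain_singleton x) h
    | cons y l' =>
      intro h
      rw [List.isChain_cons_cons] at h
      by_cases hxy : R x y
      · have : ¬ List.IsChain R (y :: l') := fun hc => h ⟨hxy, hc⟩
        obtain ⟨L₁, a, b, L₂, heq, hr⟩ := ih this
        exact ⟨x :: L₁, a, b, L₂, by rw [heq]; rfl, hr⟩
      · exact ⟨[], x, y, l', rfl, hxy⟩

lemma isRed_toWord (g : FreeGroup α) : IsRed g.toWord := by
  by_contra h
  obtain ⟨L₁, x, y, L₂, heq, hr⟩ := exists_of_not_chain' h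
  have hy : y = (x.1, !x.2) := not_not.mp hr
  have hstep : FreeGroup.Red.Step g.toWord (L₁ ++ L₂) := by
    rw [heq, hy]
    exact FreeGroup.Red.Step.not
  have h1 : FreeGroup.reduce g.toWord = FreeGroup.reduce (L₁ ++ L₂) :=
    FreeGroup.reduce.Step.eq hstep
  rw [FreeGroup.reduce_toWord] at h1
  have h2 : (FreeGroup.reduce (L₁ ++ L₂)).length ≤ (L₁ ++ L₂).length :=
    FreeGroup.Red.length_le FreeGroup.reduce.red
  have h3 : (L₁ ++ L₂).length + 2 = g.toWord.length := by
    rw [heq]; simp; omega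
  have h4 : g.toWord.length = (FreeGroup.reduce (L₁ ++ L₂)).length := by rw [h1]
  omega

/-- Cyclically reduced word. -/
def CycRed (L : List (α × Bool)) : Prop := IsRed (L ++ L)

lemma CycRed.isRed {L : List (α × Bool)} (h : CycRed L) : IsRed L :=
  List.IsChain.infix h ⟨[], L, by simp⟩

lemma CycRed.rotate {A B : List (α × Bool)} (h : CycRed (A ++ B)) :
    CycRed (B ++ A) := by
  rcases eq_or_ne (A ++ B) [] with h0 | h0
  · rcases List.append_eq_nil_iff.mp h0 with ⟨hA, hB⟩
    simp [CycRed, IsRed, hA, hB]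
  · set L := A ++ B with hL
    have h3 : IsRed (L ++ L ++ L) := by
      obtain ⟨h1, h2, hbd⟩ := List.isChain_append.mp h
      refine List.isChain_append.mpr ⟨h, h1, ?_⟩
      intro x hx y hy
      rw [List.getLast?_append_of_ne_nil _ h0] at hx
      exact hbd x hx y hy
    have : B ++ A ++ (B ++ A) <:+: L ++ L ++ L := ⟨A, B, by simp [hL]⟩
    exact List.IsChain.infix h3 this

lemma invRev_cons (x : α × Bool) (L : List (α × Bool)) :
    invRev (x :: L) = invRev L ++ [(x.1, !x.2)] := by simp [invRev]

lemma invRev_single (x : α × Bool) : invRev [x] = [(x.1, !x.2)] := by simp [invRev]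

lemma mk_single_inv (a : α) (b : Bool) :
    (mk [(a,b)] : FreeGroup α)⁻¹ = mk [(a, !b)] := by
  rw [inv_mk]; simp [invRev]

lemma pair_eq_inv_iff {p : α × Bool} {a : α} {b : Bool} :
    (a, !b) = (p.1, !p.2) ↔ p = (a, b) := by
  rcases p with ⟨x, c⟩
  simp only [Prod.mk.injEq, Prod.ext_iff]
  constructor
  · rintro ⟨h1, h2⟩; exact ⟨h1.symm, (Bool.not_inj h2).symm⟩
  · rintro ⟨h1, h2⟩; exact ⟨h1.symm, by rw [h2]⟩

def ConjInv (k : ℕ) (g : FreeGroup α) : Prop :=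
  ∃ M R : List (α × Bool), CycRed R ∧ R ≠ [] ∧ R.length = k ∧
    g.toWord = M ++ R ++ invRev M

lemma ConjInv.step {k : ℕ} {g : FreeGroup α} (u : α × Bool) (h : ConjInv k g) :
    ConjInv k (mk [u] * g * (mk [u])⁻¹) := by
  obtain ⟨M, R, hR, hR0, hk, hW⟩ := h
  obtain ⟨a, b⟩ := u
  have hg : g = mk (M ++ R ++ invRev M) := by rw [← hW, mk_toWord]
  have hU : (mk [(a,b)] : FreeGroup α)⁻¹ = mk [(a, !b)] := mk_single_inv a b
  have hWred : IsRed (M ++ R ++ invRev M) := hW ▸ isRed_toWord g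
  have hsplit : ∀ A B C : List (α × Bool),
      (mk (A ++ B ++ C) : FreeGroup α) = mk A * mk B * mk C := by
    intro A B C; rw [mul_mk, mul_mk]
  cases M with
  | cons m M₂ =>
    by_cases hm : m = (a, !b)
    · refine ⟨M₂, R, hR, hR0, hk, ?_⟩
      have hlist : (m :: M₂) ++ R ++ invRev (m :: M₂)
          = [(a,!b)] ++ (M₂ ++ R ++ invRev M₂) ++ [(a, b)] := by
        subst hm; simp [_root_.invRev_cons]
      have hmkeq : mk [(a,b)] * g * (mk [(a,b)])⁻¹ = mk (M₂ ++ R ++ invRev M₂) := by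
        rw [hg, hlist, hsplit, ← hU]
        group
      have hred2 : IsRed (M₂ ++ R ++ invRev M₂) :=
        List.IsChain.infix hWred ⟨[(a,!b)], [(a,b)], by rw [← hlist]⟩
      rw [hmkeq, toWord_mk_of_isRed hred2]
    · -- no cancellation, push letter into M
      refine ⟨(a,b) :: m :: M₂, R, hR, hR0, hk, ?_⟩
      have hlist2 : ((a,b) :: m :: M₂) ++ R ++ invRev ((a,b) :: m :: M₂)
          = [(a,b)] ++ ((m :: M₂) ++ R ++ invRev (m :: M₂)) ++ [(a, !b)] := by
        simp [_root_.invRev_cons]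
      have hmkeq : mk [(a,b)] * g * (mk [(a,b)])⁻¹
          = mk ([(a,b)] ++ ((m :: M₂) ++ R ++ invRev (m :: M₂)) ++ [(a, !b)]) := by
        rw [hg, hU]
        simp only [mul_mk]
      have hlastW : ((m :: M₂) ++ R ++ invRev (m :: M₂)).getLast? = some (m.1, !m.2) := by
        rw [_root_.invRev_cons, show (m :: M₂) ++ R ++ (invRev M₂ ++ [(m.1, !m.2)])
            = ((m :: M₂) ++ R ++ invRev M₂) ++ [(m.1, !m.2)] by simp,
          List.getLast?_concat]
      have hchain1 : IsRed (((m :: M₂) ++ R ++ invRev (m :: M₂)) ++ [(a, !b)]) := by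
        refine List.IsChain.append hWred (List.isChain_singleton _) ?_
        intro x hx y hy
        rw [hlastW, Option.mem_def, Option.some_inj] at hx
        simp only [List.head?_cons, Option.mem_def, Option.some_inj] at hy
        subst hx; subst hy
        simp only [Bool.not_not]
        intro hcontra
        exact hm (by rcases m with ⟨m1, m2⟩; simpa [Prod.ext_iff, eq_comm] using hcontra)
      have hred2 : IsRed ([(a,b)] ++ (((m :: M₂) ++ R ++ invRev (m :: M₂)) ++ [(a, !b)])) := by
        refine List.IsChain.append (List.isChain_singleton _) hchain1 ?_
        intro x hx y hy
        simp only [List.getLast?_singleton, Option.mem_def, Option.some_inj] at hx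
        have hy' : m = y := by
          rw [show ((m :: M₂) ++ R ++ invRev (m :: M₂)) ++ [(a, !b)]
              = m :: (M₂ ++ R ++ invRev (m :: M₂) ++ [(a, !b)]) by simp] at hy
          simpa using hy
        subst hx
        rw [← hy']
        exact hm
      rw [hmkeq, hlist2, toWord_mk_of_isRed (by simpa using hred2)]
  | nil =>
    rcases R with _ | ⟨r, R₂⟩
    · exact absurd rfl hR0
    simp only [invRev, List.map_nil, List.reverse_nil, List.append_nil, List.nil_append] at hW hg
    by_cases hr : r = (a, !b)
    · -- front cancellation; rotate
      subst hr
      have hrot : CycRed (R₂ ++ [(a, !b)]) :=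
        CycRed.rotate (A := [(a,!b)]) (B := R₂) (by simpa using hR)
      refine ⟨[], R₂ ++ [(a, !b)], hrot, by simp, by simpa using hk, ?_⟩
      have hmkeq : mk [(a,b)] * g * (mk [(a,b)])⁻¹ = mk (R₂ ++ [(a, !b)]) := by
        rw [hg, show ((a,!b) :: R₂ : List (α × Bool)) = [(a,!b)] ++ R₂ from rfl, ← mul_mk,
          ← mul_mk, ← hU]
        group
      rw [hmkeq, toWord_mk_of_isRed hrot.isRed]
      simp [invRev]
    · obtain ⟨R₁, s, hRs⟩ := (List.eq_nil_or_concat (r :: R₂)).resolve_left (by simp)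
      rw [List.concat_eq_append] at hRs
      by_cases hs : s = (a, b)
      · -- back cancellation; rotate
        subst hs
        have hrot : CycRed ((a,b) :: R₁) := by
          have := CycRed.rotate (A := R₁) (B := [(a,b)]) (by rw [← hRs]; exact hR)
          simpa using this
        refine ⟨[], (a,b) :: R₁, hrot, by simp, ?_, ?_⟩
        · rw [← hk, hRs]; simp
        · have hmkeq : mk [(a,b)] * g * (mk [(a,b)])⁻¹ = mk ((a,b) :: R₁) := by
            rw [hg, hRs, ← mul_mk,
              show ((a,b) :: R₁ : List (α × Bool)) = [(a,b)] ++ R₁ from rfl, ← mul_mk]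
            group
          rw [hmkeq, toWord_mk_of_isRed hrot.isRed]
          simp [invRev]
      · -- no cancellation
        refine ⟨[(a,b)], r :: R₂, hR, hR0, hk, ?_⟩
        have hmkeq : mk [(a,b)] * g * (mk [(a,b)])⁻¹
            = mk ([(a,b)] ++ (r :: R₂) ++ [(a, !b)]) := by
          rw [hg, hsplit, hU]
        have hchain1 : IsRed ((r :: R₂) ++ [(a, !b)]) := by
          refine List.IsChain.append hR.isRed (List.isChain_singleton _) ?_
          intro x hx y hy
          rw [hRs, List.getLast?_concat, Option.mem_def, Option.some_inj] at hx
          simp only [List.head?_cons, Option.mem_def, Option.some_inj] at hy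
          subst hx; subst hy
          rw [Ne, pair_eq_inv_iff]
          exact hs
        have hred2 : IsRed ([(a,b)] ++ ((r :: R₂) ++ [(a, !b)])) := by
          refine List.IsChain.append (List.isChain_singleton _) hchain1 ?_
          intro x hx y hy
          simp only [List.getLast?_singleton, Option.mem_def, Option.some_inj] at hx
          simp only [List.cons_append, List.head?_cons, Option.mem_def, Option.some_inj] at hy
          subst hx; subst hy
          exact hr
        rw [hmkeq, toWord_mk_of_isRed (by simpa using hred2)]
        simp [invRev_single]

lemma conjInv_conj {k : ℕ} (X : List (α × Bool)) :
    ∀ g : FreeGroup α, ConjInv k g → ConjInv k (mk X * g * (mk X)⁻¹) := by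
  induction X with
  | nil =>
    intro g hg
    simpa [FreeGroup.one_eq_mk.symm] using hg
  | cons x X ih =>
    intro g hg
    have hx : (mk (x :: X) : FreeGroup α) = mk [x] * mk X := by
      rw [mul_mk]; rfl
    have := ConjInv.step x (ih g hg)
    rw [hx, mul_inv_rev]
    convert this using 1
    group

lemma norm_mk_of_isRed {L : List (α × Bool)} (h : IsRed L) :
    FreeGroup.norm (mk L) = L.length := by
  rw [FreeGroup.norm, toWord_mk_of_isRed h]

lemma le_norm_conj {R : List (α × Bool)} (hR : CycRed R) (hR0 : R ≠ [])
    (x : FreeGroup α) : R.length ≤ FreeGroup.norm (x * mk R * x⁻¹) := by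
  have base : ConjInv R.length (mk R) :=
    ⟨[], R, hR, hR0, rfl, by simp [toWord_mk_of_isRed hR.isRed, invRev]⟩
  have h2 := conjInv_conj x.toWord (mk R) base
  rw [mk_toWord] at h2
  obtain ⟨M, R', _, _, hk, hW⟩ := h2
  have : (x * mk R * x⁻¹).toWord.length = M.length + R'.length + M.length := by
    rw [hW]; simp [invRev_length]; omega
  rw [FreeGroup.norm, this]
  omega

lemma cycNorm_conj (z g : FreeGroup α) : cycNorm (z * g * z⁻¹) = cycNorm g := by
  unfold cycNorm
  congr 1
  ext m
  constructor
  · rintro ⟨x, rfl⟩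
    exact ⟨x * z, by group⟩
  · rintro ⟨x, rfl⟩
    exact ⟨x * z⁻¹, by group⟩

lemma cycNorm_eq {R : List (α × Bool)} (hR : CycRed R) (hR0 : R ≠ []) :
    cycNorm (mk R) = R.length := by
  refine le_antisymm ?_ ?_
  · apply Nat.sInf_le
    refine ⟨1, ?_⟩
    show FreeGroup.norm (1 * mk R * 1⁻¹) = R.length
    rw [one_mul, inv_one, mul_one, norm_mk_of_isRed hR.isRed]
  · exact le_csInf ⟨_, ⟨1, rfl⟩⟩ (by rintro _ ⟨x, rfl⟩; exact le_norm_conj hR hR0 x)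

end General

section PartB

def chunk (p x y : Fin 2) : List (Fin 2 × Bool) :=
  if x = 0 then (0, true) :: (if y = 0 then [(1, false)] else []) else
    if p = 0 then [] else [(1, true)]

noncomputable def tG : Fin 2 → FreeGroup (Fin 2) := fun x =>
  if x = 0 then FreeGroup.of 0 * (FreeGroup.of 1)⁻¹ else FreeGroup.of 1

noncomputable def βe : Fin 2 → Fin 2 → FreeGroup (Fin 2) := fun p x =>
  if p = 0 ∧ x = 1 then (FreeGroup.of (1 : Fin 2))⁻¹ else 1

lemma of_eq_mk (x : Fin 2) : (FreeGroup.of x : FreeGroup (Fin 2)) = mk [(x, true)] := rfl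

lemma of_inv_eq_mk (x : Fin 2) :
    (FreeGroup.of x : FreeGroup (Fin 2))⁻¹ = mk [(x, false)] := by
  rw [of_eq_mk, inv_mk]; simp [invRev]

lemma mk_cancel_pair (x : Fin 2) :
    (mk [(x, false), (x, true)] : FreeGroup (Fin 2)) = mk [] := by
  apply FreeGroup.reduce.exact
  simp [FreeGroup.reduce]

lemma mk_cancel_cons (x : Fin 2) (a : Fin 2 × Bool) :
    (mk [a, (x, false), (x, true)] : FreeGroup (Fin 2)) = mk [a] := by
  apply FreeGroup.reduce.exact
  rcases a with ⟨u, v⟩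
  fin_cases x <;> fin_cases u <;> fin_cases v <;> simp [FreeGroup.reduce]

lemma chunk_val (p x y : Fin 2) :
    (mk (chunk p x y) : FreeGroup (Fin 2)) = βe p x * tG x * (βe x y)⁻¹ := by
  fin_cases p <;> fin_cases x <;> fin_cases y <;>
    simp [chunk, tG, βe, of_eq_mk, of_inv_eq_mk, invRev, mul_mk, mk_cancel_pair, mk_cancel_cons,
      ← FreeGroup.one_eq_mk]

variable {n : ℕ}

def dF (hn : 0 < n) (c : Fin n → Fin 2) : ℕ → Fin 2 :=
  fun i => c ⟨i % n, Nat.mod_lt _ hn⟩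

lemma dF_period (hn : 0 < n) (c : Fin n → Fin 2) (i : ℕ) :
    dF hn c (i + n) = dF hn c i := by
  simp [dF, Nat.add_mod_right]

noncomputable def SS (hn : 0 < n) (c : Fin n → Fin 2) (m : ℕ) : List (Fin 2 × Bool) :=
  (List.range m).flatMap fun i =>
    chunk (dF hn c (i + (n-1))) (dF hn c i) (dF hn c (i+1))

lemma SS_succ (hn : 0 < n) (c : Fin n → Fin 2) (m : ℕ) :
    SS hn c (m+1) = SS hn c m
      ++ chunk (dF hn c (m + (n-1))) (dF hn c m) (dF hn c (m+1)) := by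
  rw [SS, SS, List.range_succ, List.flatMap_append]
  simp

lemma tele (hn : 0 < n) (c : Fin n → Fin 2) (m : ℕ) :
    (mk (SS hn c m) : FreeGroup (Fin 2))
      = βe (dF hn c (n-1)) (dF hn c 0)
        * ((List.range m).map fun i => tG (dF hn c i)).prod
        * (βe (dF hn c (m + (n-1))) (dF hn c m))⁻¹ := by
  induction m with
  | zero =>
    simp [SS, ← FreeGroup.one_eq_mk]
  | succ m ih =>
    rw [SS_succ, ← mul_mk, ih, chunk_val]
    have h1 : m + 1 + (n-1) = m + n := by omega
    have h2 : dF hn c (m + 1 + (n-1)) = dF hn c m := by rw [h1, dF_period]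
    rw [h2, List.range_succ, List.map_append, List.prod_append]
    simp
    group

lemma fin2_cases (x : Fin 2) : x = 0 ∨ x = 1 := by fin_cases x <;> simp

lemma eq_pair_from {u : Fin 2 × Bool} {a : Fin 2} (h : (a, true) = (u.1, !u.2)) :
    u = (a, false) := by
  rcases u with ⟨u1, u2⟩; cases u2 <;> simp_all

lemma chain_SS (hn : 0 < n) (c : Fin n → Fin 2) (m : ℕ) :
    List.IsChain (fun p q : Fin 2 × Bool => q ≠ (p.1, !p.2)) (SS hn c m) ∧
      (∀ p, (SS hn c m).getLast? = some p →
        (p = (1, false) → dF hn c m = 0) ∧ p ≠ (0, false)) := by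
  induction m with
  | zero => simp [SS]
  | succ m ih =>
    rw [SS_succ]
    set ck := chunk (dF hn c (m + (n-1))) (dF hn c m) (dF hn c (m+1)) with hck
    have hbd : ∀ u, (SS hn c m).getLast? = some u → ∀ v, ck.head? = some v →
        v ≠ (u.1, !u.2) := by
      intro u hu v hv hcontra
      obtain ⟨hu1, hu2⟩ := ih.2 u hu
      rw [hck] at hv
      rcases fin2_cases (dF hn c m) with hx | hx <;>
        rcases fin2_cases (dF hn c (m + (n-1))) with hp | hp <;>
          rcases fin2_cases (dF hn c (m+1)) with hy | hy <;>
            simp [chunk, hx, hp, hy] at hv <;> subst hv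
      all_goals first
        | exact hu2 (eq_pair_from hcontra)
        | (have h := hu1 (eq_pair_from hcontra); rw [hx] at h; exact absurd h (by decide))
    constructor
    · -- chain
      refine List.IsChain.append ih.1 ?_ ?_
      · rcases fin2_cases (dF hn c m) with hx | hx <;>
          rcases fin2_cases (dF hn c (m + (n-1))) with hp | hp <;>
            rcases fin2_cases (dF hn c (m+1)) with hy | hy <;>
              simp [hck, chunk, hx, hp, hy]
      · intro u hu v hv
        exact hbd u hu v hv
    · intro p hp
      rcases eq_or_ne ck [] with h0 | h0
      · rw [h0, List.append_nil] at hp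
        obtain ⟨h1, h2⟩ := ih.2 p hp
        refine ⟨fun hpf => ?_, h2⟩
        -- ck = [] forces dF m = 1
        have hx : dF hn c m = 1 := by
          rcases fin2_cases (dF hn c m) with hx | hx
          · exfalso
            rcases fin2_cases (dF hn c (m+1)) with hy | hy <;>
              simp [hck, chunk, hx, hy] at h0
          · exact hx
        have := h1 hpf
        rw [this] at hx
        exact absurd hx (by decide)
      · rw [List.getLast?_append_of_ne_nil _ h0] at hp
        rcases fin2_cases (dF hn c m) with hx | hx <;>
          rcases fin2_cases (dF hn c (m + (n-1))) with hp' | hp' <;>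
            rcases fin2_cases (dF hn c (m+1)) with hy | hy <;>
              simp [hck, chunk, hx, hp', hy] at hp h0 <;> subst hp <;>
                simp_all

lemma SS_double (hn : 0 < n) (c : Fin n → Fin 2) :
    SS hn c (n + n) = SS hn c n ++ SS hn c n := by
  rw [SS, List.range_add, List.flatMap_append]
  congr 1
  rw [List.flatMap_map]
  apply List.flatMap_congr
  intro i _
  show chunk (dF hn c (n + i + (n-1))) (dF hn c (n + i)) (dF hn c (n + i + 1))
      = chunk (dF hn c (i + (n-1))) (dF hn c i) (dF hn c (i+1))
  have e1 : n + i + (n-1) = i + (n-1) + n := by omega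
  have e2 : n + i = i + n := by omega
  have e3 : n + i + 1 = i + 1 + n := by omega
  rw [e1, e3, e2, dF_period, dF_period, dF_period]

lemma SS_ne_nil (hn : 0 < n) (c : Fin n → Fin 2) : SS hn c n ≠ [] := by
  intro h
  rw [SS, List.flatMap_eq_nil_iff] at h
  have h0 := h 0 (by simp [List.mem_range]; omega)
  have h1 := h (n-1) (by simp [List.mem_range]; omega)
  have e0 : (0 : ℕ) + (n - 1) = n - 1 := by omega
  rw [e0] at h0
  -- chunk p x y = [] forces x = 1 and p = 0
  have hforce : ∀ p x y : Fin 2, chunk p x y = [] → x = 1 ∧ p = 0 := by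
    intro p x y hc
    rcases fin2_cases x with hx | hx <;> rcases fin2_cases p with hp | hp <;>
      rcases fin2_cases y with hy | hy <;> simp [chunk, hx, hp, hy] at hc ⊢
  have f0 := hforce _ _ _ h0
  have f1 := hforce _ _ _ h1
  rw [f0.2] at f1
  exact absurd f1.1 (by decide)

lemma list_sum_range (f : ℕ → ℕ) (m : ℕ) :
    ((List.range m).map f).sum = ∑ i ∈ Finset.range m, f i := by
  induction m with
  | zero => simp
  | succ m ih => rw [List.range_succ, List.map_append, List.sum_append,
      Finset.sum_range_succ, ih]; simp

lemma sum_shift_one (f : ℕ → ℕ) (hf : ∀ i, f (i + n) = f i) :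
    ∑ i ∈ Finset.range n, f (i + 1) = ∑ i ∈ Finset.range n, f i := by
  have h1 := Finset.sum_range_succ f n
  have h2 := Finset.sum_range_succ' f n
  rw [h1] at h2
  have : f n = f 0 := by simpa using hf 0
  omega

lemma sum_shift (k : ℕ) : ∀ (f : ℕ → ℕ), (∀ i, f (i + n) = f i) →
    ∑ i ∈ Finset.range n, f (i + k) = ∑ i ∈ Finset.range n, f i := by
  induction k with
  | zero => intro f hf; simp
  | succ k ih =>
    intro f hf
    have hper : ∀ i, (fun j => f (j + 1)) (i + n) = (fun j => f (j + 1)) i := by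
      intro i
      show f (i + n + 1) = f (i + 1)
      rw [show i + n + 1 = i + 1 + n by omega, hf]
    calc ∑ i ∈ Finset.range n, f (i + (k+1))
        = ∑ i ∈ Finset.range n, (fun j => f (j+1)) (i + k) := by
          apply Finset.sum_congr rfl; intro i _; rfl
      _ = ∑ i ∈ Finset.range n, f (i + 1) := ih (fun j => f (j+1)) hper
      _ = ∑ i ∈ Finset.range n, f i := sum_shift_one f hf

lemma SS_length (hn : 0 < n) (c : Fin n → Fin 2) :
    (SS hn c n).length
      + (Finset.filter (fun i => dF hn c i = 0 ∧ dF hn c (i+1) = 1) (Finset.range n)).card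
    = n + (Finset.filter (fun i => dF hn c i = 0 ∧ dF hn c (i+1) = 0) (Finset.range n)).card := by
  have hlen : (SS hn c n).length = ∑ i ∈ Finset.range n,
      (chunk (dF hn c (i + (n-1))) (dF hn c i) (dF hn c (i+1))).length := by
    rw [SS, List.length_flatMap]
    exact list_sum_range _ n
  set f : ℕ → ℕ := fun i => if dF hn c i = 0 ∧ dF hn c (i+1) = 1 then 1 else 0 with hf
  have hfper : ∀ i, f (i + n) = f i := by
    intro i
    simp only [hf]
    rw [dF_period, show i + n + 1 = i + 1 + n by omega, dF_period]
  have hpoint : ∀ i, (chunk (dF hn c (i + (n-1))) (dF hn c i) (dF hn c (i+1))).length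
      + f (i + (n-1))
      = 1 + (if dF hn c i = 0 ∧ dF hn c (i+1) = 0 then 1 else 0) := by
    intro i
    have hper : dF hn c (i + (n-1) + 1) = dF hn c i := by
      rw [show i + (n-1) + 1 = i + n by omega, dF_period]
    simp only [hf]
    rcases fin2_cases (dF hn c i) with hx | hx <;>
      rcases fin2_cases (dF hn c (i + (n-1))) with hp | hp <;>
        rcases fin2_cases (dF hn c (i+1)) with hy | hy <;>
          simp [chunk, hx, hp, hy, hper]
  have hsum : (SS hn c n).length + ∑ i ∈ Finset.range n, f (i + (n-1))
      = n + (Finset.filter (fun i => dF hn c i = 0 ∧ dF hn c (i+1) = 0) (Finset.range n)).card := by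
    rw [hlen, ← Finset.sum_add_distrib, Finset.card_filter]
    rw [Finset.sum_congr rfl (fun i _ => hpoint i), Finset.sum_add_distrib]
    simp [Finset.card_range]
  rw [← hsum, sum_shift (n-1) f hfper, hf, Finset.card_filter]

end PartB

section Glue
variable {n : ℕ}

lemma get?_ofFn_mod (hn : 0 < n) (c : Fin n → Fin 2) (m : ℕ) :
    (List.ofFn c)[m % n]? = some (dF hn c m) := by
  have hlt : m % n < n := Nat.mod_lt _ hn
  rw [List.getElem?_ofFn]
  simp [List.ofFnNthVal, hlt, dF]

lemma cycCount_pair (hn : 0 < n) (c : Fin n → Fin 2) (v0 v1 : Fin 2) :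
    cycCount (List.ofFn c) [v0, v1]
      = (Finset.filter (fun i => dF hn c i = v0 ∧ dF hn c (i+1) = v1)
          (Finset.range n)).card := by
  unfold cycCount
  rw [List.length_ofFn]
  refine congrArg Finset.card (Finset.filter_congr ?_)
  intro i hi
  rw [Finset.mem_range] at hi
  constructor
  · intro h
    have h0 := h 0 (by simp)
    have h1 := h 1 (by simp)
    rw [get?_ofFn_mod hn c] at h0 h1
    refine ⟨?_, ?_⟩
    · have : dF hn c (i + 0) = v0 := by simpa using h0
      simpa using this
    · simpa using h1
  · rintro ⟨h0, h1⟩ j hj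
    rw [Finset.mem_range] at hj
    obtain rfl | rfl : j = 0 ∨ j = 1 := by simp at hj; omega
    · rw [get?_ofFn_mod hn c]
      simpa using h0
    · rw [get?_ofFn_mod hn c]
      simpa using h1

lemma ofFn_eq_map_range (hn : 0 < n) (c : Fin n → Fin 2) :
    List.ofFn c = (List.range n).map (dF hn c) := by
  refine List.ext_getElem (by simp) ?_
  intro i h1 h2
  simp only [List.getElem_ofFn, List.getElem_map, List.getElem_range]
  have hi : i < n := by simpa using h1
  simp only [dF]
  congr 1
  exact Fin.ext (by simp [Nat.mod_eq_of_lt hi])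

end Glue

theorem stmt17 (n : ℕ) (hn : 1 ≤ n) (c : Fin n → Fin 2)
    (τ : FreeGroup (Fin 2) →* FreeGroup (Fin 2))
    (hτ : τ = FreeGroup.lift fun i : Fin 2 =>
      if i = 0 then FreeGroup.of (0 : Fin 2) * (FreeGroup.of (1 : Fin 2))⁻¹
      else FreeGroup.of (1 : Fin 2))
    (w : FreeGroup (Fin 2))
    (hw : w = ((List.ofFn c).map FreeGroup.of).prod) :
    (cycNorm (τ w) : ℤ) =
      (n : ℤ) + (cycCount (List.ofFn c) [(0 : Fin 2), 0] : ℤ)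
        - (cycCount (List.ofFn c) [(0 : Fin 2), 1] : ℤ) := by
  have hn' : 0 < n := hn
  have htau : ∀ x : Fin 2, τ (FreeGroup.of x) = tG x := by
    intro x
    subst hτ
    rw [FreeGroup.lift_apply_of]
    rfl
  have hw2 : τ w = ((List.range n).map (fun i => tG (dF hn' c i))).prod := by
    rw [hw, map_list_prod τ, List.map_map, ofFn_eq_map_range hn' c, List.map_map]
    congr 1
    exact List.map_congr_left (fun i _ => htau (dF hn' c i))
  have htele := tele hn' c n
  have e1 : dF hn' c (n + (n-1)) = dF hn' c (n-1) := by
    rw [show n + (n-1) = (n-1) + n by omega, dF_period]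
  have e2 : dF hn' c n = dF hn' c 0 := by
    have h := dF_period hn' c 0
    simpa using h
  have hconj : τ w = (βe (dF hn' c (n-1)) (dF hn' c 0))⁻¹ * mk (SS hn' c n)
      * ((βe (dF hn' c (n-1)) (dF hn' c 0))⁻¹)⁻¹ := by
    rw [htele, e1, e2, ← hw2]
    group
  have hcyc : CycRed (SS hn' c n) := by
    have h2 := (chain_SS hn' c (n+n)).1
    rw [SS_double hn' c] at h2
    exact h2
  have hne := SS_ne_nil hn' c
  have hlen := SS_length hn' c
  have hmain : cycNorm (τ w) = (SS hn' c n).length := by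
    rw [hconj, cycNorm_conj, cycNorm_eq hcyc hne]
  rw [hmain, cycCount_pair hn' c 0 0, cycCount_pair hn' c 0 1]
  omega
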